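/- Let k be a finite field with q elements, A a finite-dimensional k-algebra, and U, V non-isomorphic indecomposable finite-dimensional A-modules. Let s, t be positive integers, M = U^{⊕s}, N = V^{⊕t}, and assume every short exact sequence of A-modules 0 → N → E → M → 0 splits. Then the number of A-submodules B of M ⊕ N with B ≅ N and (M ⊕ N)/B ≅ M equals |Hom_A(N, M)| = q^{s·t·dim_k Hom_A(V, U)}. -/

import Mathlib

lemma aux_unit_or_nilpotent {k : Type} [Field k] {A : Type} [Ring A] [Algebra k A]
    {W : Type} [AddCommGroup W] [Module k W] [Module A W] [IsScalarTower k A W]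
    [FiniteDimensional k W]
    (hind : ∀ N₁ N₂ : Submodule A W, IsCompl N₁ N₂ → N₁ = ⊥ ∨ N₂ = ⊥)
    (f : Module.End A W) : IsUnit f ∨ IsNilpotent f := by
  haveI : IsNoetherian A W := isNoetherian_of_tower k inferInstance
  haveI : IsArtinian A W := isArtinian_of_tower k inferInstance
  obtain ⟨n₀, hn⟩ := Filter.eventually_atTop.mp f.eventually_isCompl_ker_pow_range_pow
  have hm := hn (max n₀ 1) (le_max_left _ _)
  rcases hind _ _ hm with h | h
  · left
    rw [Module.End.isUnit_iff]
    have hinj : Function.Injective f := by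
      have hpow : Function.Injective (f ^ max n₀ 1) := by
        rw [← LinearMap.ker_eq_bot]; exact h
      obtain ⟨j, hj⟩ : ∃ j, max n₀ 1 = j + 1 := ⟨max n₀ 1 - 1, by omega⟩
      intro x y hxy
      apply hpow
      rw [hj, pow_succ]
      simp only [Module.End.mul_apply, hxy]
    exact ⟨hinj, IsArtinian.surjective_of_injective_endomorphism f hinj⟩
  · right
    exact ⟨max n₀ 1, by rwa [← LinearMap.range_eq_bot]⟩

lemma aux_end_zero_ne_one {A : Type} [Ring A] {W : Type} [AddCommGroup W] [Module A W]
    (hW : Nontrivial W) : (0 : Module.End A W) ≠ 1 := by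
  intro h
  obtain ⟨w, hw⟩ := exists_ne (0 : W)
  have := LinearMap.ext_iff.mp h w
  simp only [LinearMap.zero_apply, Module.End.one_apply] at this
  exact hw this.symm

lemma aux_nonunit_add {k : Type} [Field k] {A : Type} [Ring A] [Algebra k A]
    {W : Type} [AddCommGroup W] [Module k W] [Module A W] [IsScalarTower k A W]
    [FiniteDimensional k W]
    (hind : ∀ N₁ N₂ : Submodule A W, IsCompl N₁ N₂ → N₁ = ⊥ ∨ N₂ = ⊥)
    {a b : Module.End A W} (ha : ¬ IsUnit a) (hb : ¬ IsUnit b) : ¬ IsUnit (a + b) := by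
  intro hu
  set w : Module.End A W := ↑hu.unit⁻¹ with hwdef
  have key : ∀ c, (a + b) * (w * c) = c := fun c => by
    rw [← mul_assoc, IsUnit.mul_val_inv, one_mul]
  have hwa : ¬ IsUnit (w * a) := by
    intro h
    apply ha
    rw [← key a]
    exact hu.mul h
  have hna : IsNilpotent (w * a) :=
    (aux_unit_or_nilpotent (k := k) hind (w * a)).resolve_left hwa
  have h1' : w * a + w * b = 1 := by rw [← mul_add]; exact IsUnit.val_inv_mul hu
  have hub : IsUnit (w * b) := by
    rw [eq_sub_of_add_eq' h1']
    exact hna.isUnit_one_sub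
  apply hb
  rw [← key b]
  exact hu.mul hub

lemma aux_nonunit_sum {k : Type} [Field k] {A : Type} [Ring A] [Algebra k A]
    {W : Type} [AddCommGroup W] [Module k W] [Module A W] [IsScalarTower k A W]
    [FiniteDimensional k W] (hW : Nontrivial W)
    (hind : ∀ N₁ N₂ : Submodule A W, IsCompl N₁ N₂ → N₁ = ⊥ ∨ N₂ = ⊥)
    {ι : Type} (sfin : Finset ι) (f : ι → Module.End A W)
    (h : ∀ i ∈ sfin, ¬ IsUnit (f i)) : ¬ IsUnit (∑ i ∈ sfin, f i) := by
  classical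
  induction sfin using Finset.induction with
  | empty =>
    simp only [Finset.sum_empty]
    intro h0
    exact aux_end_zero_ne_one hW (isUnit_zero_iff.mp h0)
  | insert _ _ hx ih =>
    rw [Finset.sum_insert hx]
    exact aux_nonunit_add (k := k) hind (h _ (Finset.mem_insert_self _ _))
      (ih fun i hi => h i (Finset.mem_insert_of_mem hi))

section pg
variable {A : Type} [Ring A]
    {U V : Type} [AddCommGroup U] [Module A U] [AddCommGroup V] [Module A V]


lemma aux_pgood_single (k : Type) [Field k] [Algebra k A] [Module k U] [Module k V]
    [IsScalarTower k A U] [IsScalarTower k A V]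
    [FiniteDimensional k U] [FiniteDimensional k V] (hV : Nontrivial V)
    (hindU : ∀ N₁ N₂ : Submodule A U, IsCompl N₁ N₂ → N₁ = ⊥ ∨ N₂ = ⊥)
    (hnoniso : IsEmpty (U ≃ₗ[A] V))
    (a : V →ₗ[A] U) (b : U →ₗ[A] V) : ¬ IsUnit (b ∘ₗ a : Module.End A V) := by
  intro hu
  set x : Module.End A V := b ∘ₗ a with hxdef
  set w : Module.End A V := ↑hu.unit⁻¹ with hwdef
  have hwx : w * x = 1 := IsUnit.val_inv_mul hu
  have hxw : x * w = 1 := IsUnit.mul_val_inv hu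
  have h1 : ∀ v : V, b (a v) = x v := fun v => rfl
  have h2 : ∀ v : V, w (x v) = v := fun v => by
    have := LinearMap.ext_iff.mp hwx v
    simpa only [Module.End.mul_apply, Module.End.one_apply] using this
  set e : Module.End A U := a ∘ₗ (w ∘ₗ b) with hedef
  have he : e * e = e := by
    apply LinearMap.ext
    intro u
    simp only [Module.End.mul_apply, hedef, LinearMap.comp_apply]
    rw [h1, h2]
  rcases aux_unit_or_nilpotent (k := k) hindU e with hu' | hn
  · have he1 : e = 1 := hu'.mul_left_cancel (by rw [he, mul_one])
    refine hnoniso.elim ?_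
    refine (LinearEquiv.ofLinear a (w ∘ₗ b) ?_ ?_).symm
    · apply LinearMap.ext
      intro u
      have := LinearMap.ext_iff.mp he1 u
      simp only [hedef, LinearMap.comp_apply, Module.End.one_apply] at this
      simpa only [LinearMap.comp_apply, LinearMap.id_apply] using this
    · apply LinearMap.ext
      intro v
      simp only [LinearMap.comp_apply, LinearMap.id_apply]
      rw [h1, h2]
  · obtain ⟨n, hen⟩ := hn
    have hpow : ∀ m : ℕ, e ^ (m + 1) = e := by
      intro m
      induction m with
      | zero => rw [pow_one]
      | succ m ih => rw [pow_succ, ih, he]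
    have he0 : e = 0 := by
      cases n with
      | zero =>
        rw [pow_zero] at hen
        calc e = e * 1 := (mul_one e).symm
          _ = e * 0 := by rw [hen]
          _ = 0 := mul_zero e
      | succ m => rw [← hpow m, hen]
    have hx0 : x = 0 := by
      apply LinearMap.ext
      intro v
      have hkey : b (e (a v)) = x v := by
        simp only [hedef, LinearMap.comp_apply]
        rw [h1, h1, h2]
      rw [← hkey, he0]
      simp
    rw [hx0] at hu
    exact aux_end_zero_ne_one hV (isUnit_zero_iff.mp hu) 

lemma aux_pgood (k : Type) [Field k] [Algebra k A] [Module k U] [Module k V]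
    [IsScalarTower k A U] [IsScalarTower k A V]
    [FiniteDimensional k U] [FiniteDimensional k V] (hV : Nontrivial V)
    (hindU : ∀ N₁ N₂ : Submodule A U, IsCompl N₁ N₂ → N₁ = ⊥ ∨ N₂ = ⊥)
    (hindV : ∀ N₁ N₂ : Submodule A V, IsCompl N₁ N₂ → N₁ = ⊥ ∨ N₂ = ⊥)
    (hnoniso : IsEmpty (U ≃ₗ[A] V)) (s : ℕ)
    (a : V →ₗ[A] (Fin s → U)) (b : (Fin s → U) →ₗ[A] V) :
    ¬ IsUnit (b ∘ₗ a : Module.End A V) := by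
  have hdecomp : (b ∘ₗ a : Module.End A V) =
      ∑ i : Fin s, ((b ∘ₗ LinearMap.single A (fun _ => U) i) ∘ₗ
        ((LinearMap.proj i : (Fin s → U) →ₗ[A] U) ∘ₗ a) : Module.End A V) := by
    apply LinearMap.ext
    intro v
    rw [LinearMap.sum_apply]
    simp only [LinearMap.comp_apply, LinearMap.proj_apply, LinearMap.single_apply]
    rw [← map_sum]
    congr 1
    exact (Finset.univ_sum_single (a v)).symm
  rw [hdecomp]
  exact aux_nonunit_sum (k := k) hV hindV _ _
    (fun i _ => aux_pgood_single k hV hindU hnoniso _ _)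
end pg

/-- The linear equivalence `(Fin (t+1) → V) ≃ V × (Fin t → V)`. -/
def consLinearEquiv (A V : Type) [Ring A] [AddCommGroup V] [Module A V] (t : ℕ) :
    (Fin (t + 1) → V) ≃ₗ[A] V × (Fin t → V) where
  toFun x := (x 0, fun i => x i.succ)
  invFun p := Fin.cons p.1 p.2
  map_add' x y := rfl
  map_smul' c x := rfl
  left_inv x := funext fun i => Fin.cases rfl (fun j => rfl) i
  right_inv p := by
    refine Prod.ext ?_ ?_
    · simp
    · funext i; simp

section L
variable {k : Type} [Field k] {A : Type} [Ring A] [Algebra k A]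
    {V : Type} [AddCommGroup V] [Module k V] [Module A V] [IsScalarTower k A V]
    [FiniteDimensional k V]

lemma aux_L (k : Type) [Field k] [Algebra k A] [Module k V] [IsScalarTower k A V]
    [FiniteDimensional k V]
    (hindV : ∀ N₁ N₂ : Submodule A V, IsCompl N₁ N₂ → N₁ = ⊥ ∨ N₂ = ⊥) :
    ∀ (t : ℕ) (M'' : Type) [AddCommGroup M''] [Module A M'']
      (_ : ∀ (a : V →ₗ[A] M'') (b : M'' →ₗ[A] V), ¬ IsUnit (b ∘ₗ a : Module.End A V))
      (g : (Fin t → V) →ₗ[A] M'') (h : M'' →ₗ[A] (Fin t → V)),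
      Function.Bijective ((LinearMap.id : (Fin t → V) →ₗ[A] (Fin t → V)) - h ∘ₗ g) := by
  intro t
  induction t with
  | zero =>
    intro M'' _ _ hP g h
    haveI : Subsingleton (Fin 0 → V) := by infer_instance
    exact ⟨fun a b _ => Subsingleton.elim a b, fun a => ⟨a, Subsingleton.elim _ _⟩⟩
  | succ t ih =>
    intro M'' _ _ hP g h
    set Y := (Fin t → V)
    set E := consLinearEquiv A V t with hEdef
    set g' : V × Y →ₗ[A] M'' := g ∘ₗ E.symm.toLinearMap with hg'
    set h' : M'' →ₗ[A] V × Y := E.toLinearMap ∘ₗ h with hh'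
    set f11 : Module.End A V :=
      ((LinearMap.fst A V Y) ∘ₗ h') ∘ₗ (g' ∘ₗ (LinearMap.inl A V Y)) with hf11
    set f12 : Y →ₗ[A] V :=
      ((LinearMap.fst A V Y) ∘ₗ h') ∘ₗ (g' ∘ₗ (LinearMap.inr A V Y)) with hf12
    set f21 : V →ₗ[A] Y :=
      ((LinearMap.snd A V Y) ∘ₗ h') ∘ₗ (g' ∘ₗ (LinearMap.inl A V Y)) with hf21
    set f22 : Y →ₗ[A] Y :=
      ((LinearMap.snd A V Y) ∘ₗ h') ∘ₗ (g' ∘ₗ (LinearMap.inr A V Y)) with hf22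
    have hf11nu : ¬ IsUnit f11 := hP (g' ∘ₗ (LinearMap.inl A V Y)) ((LinearMap.fst A V Y) ∘ₗ h')
    have hα : IsUnit ((1 : Module.End A V) - f11) :=
      ((aux_unit_or_nilpotent (k := k) hindV f11).resolve_left hf11nu).isUnit_one_sub
    set β : Module.End A V := ↑hα.unit⁻¹ with hβ
    have hβ1 : ∀ v, β (v - f11 v) = v := by
      intro v
      have := LinearMap.ext_iff.mp (IsUnit.val_inv_mul hα) v
      simpa only [Module.End.mul_apply, Module.End.one_apply, LinearMap.sub_apply,
        LinearMap.id_apply] using this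
    have hβ2 : ∀ v, β v - f11 (β v) = v := by
      intro v
      have := LinearMap.ext_iff.mp (IsUnit.mul_val_inv hα) v
      simpa only [Module.End.mul_apply, Module.End.one_apply, LinearMap.sub_apply,
        LinearMap.id_apply] using this
    -- the Schur complement, factored through M'' × M''
    set g2 : Y →ₗ[A] M'' × M'' :=
      (g' ∘ₗ (LinearMap.inr A V Y)).prod
        ((g' ∘ₗ (LinearMap.inl A V Y)) ∘ₗ β ∘ₗ
          (((LinearMap.fst A V Y) ∘ₗ h') ∘ₗ (g' ∘ₗ (LinearMap.inr A V Y)))) with hg2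
    set h2 : M'' × M'' →ₗ[A] Y :=
      ((LinearMap.snd A V Y) ∘ₗ h').coprod ((LinearMap.snd A V Y) ∘ₗ h') with hh2
    have hP2 : ∀ (a : V →ₗ[A] M'' × M'') (b : M'' × M'' →ₗ[A] V),
        ¬ IsUnit (b ∘ₗ a : Module.End A V) := by
      intro a b
      have hsplit2 : (b ∘ₗ a : Module.End A V) =
          ((b ∘ₗ LinearMap.inl A M'' M'') ∘ₗ ((LinearMap.fst A M'' M'') ∘ₗ a) :
            Module.End A V) +
          ((b ∘ₗ LinearMap.inr A M'' M'') ∘ₗ ((LinearMap.snd A M'' M'') ∘ₗ a) :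
            Module.End A V) := by
        apply LinearMap.ext
        intro v
        simp only [LinearMap.add_apply, LinearMap.comp_apply, LinearMap.fst_apply,
          LinearMap.snd_apply, LinearMap.inl_apply, LinearMap.inr_apply]
        rw [← map_add]
        congr 1
        exact Prod.ext (by simp) (by simp)
      rw [hsplit2]
      exact aux_nonunit_add (k := k) hindV (hP _ _) (hP _ _)
    have hδ := ih (M'' × M'') hP2 g2 h2
    set δ : Y →ₗ[A] Y := LinearMap.id - h2 ∘ₗ g2 with hδdef
    have hδeq : ∀ y, δ y = y - (f22 y + f21 (β (f12 y))) := by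
      intro y
      simp only [hδdef, LinearMap.sub_apply, LinearMap.id_apply, LinearMap.comp_apply,
        hg2, hh2, LinearMap.coprod_apply, LinearMap.prod_apply, Pi.prod, Function.prod, hf22, hf21, hf12]
    set F' : V × Y →ₗ[A] V × Y := LinearMap.id - h' ∘ₗ g' with hF'def
    have hF' : ∀ p : V × Y, F' p = (p.1 - (f11 p.1 + f12 p.2), p.2 - (f21 p.1 + f22 p.2)) := by
      intro p
      have hp : p = LinearMap.inl A V Y p.1 + LinearMap.inr A V Y p.2 := by
        refine Prod.ext (by simp) (by simp)
      simp only [hF'def, LinearMap.sub_apply, LinearMap.id_apply]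
      refine Prod.ext ?_ ?_
      · have : (h' (g' p)).1 = f11 p.1 + f12 p.2 := by
          conv_lhs => rw [hp]
          simp only [map_add, Prod.fst_add, hf11, hf12, LinearMap.comp_apply,
            LinearMap.fst_apply]
        simp [this]
      · have : (h' (g' p)).2 = f21 p.1 + f22 p.2 := by
          conv_lhs => rw [hp]
          simp only [map_add, Prod.snd_add, hf21, hf22, LinearMap.comp_apply,
            LinearMap.snd_apply]
        simp [this]
    have hbij' : Function.Bijective F' := by
      constructor
      · rw [← LinearMap.ker_eq_bot]
        rw [LinearMap.ker_eq_bot']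
        intro p hp
        rw [hF'] at hp
        have h1 : p.1 - (f11 p.1 + f12 p.2) = 0 := congrArg Prod.fst hp
        have h2 : p.2 - (f21 p.1 + f22 p.2) = 0 := congrArg Prod.snd hp
        have h1' : p.1 - f11 p.1 = f12 p.2 :=
          sub_eq_iff_eq_add'.mpr (sub_eq_zero.mp h1)
        have hp1 : p.1 = β (f12 p.2) := by rw [← h1', hβ1]
        have hδ0 : δ p.2 = 0 := by
          rw [hδeq, ← hp1, add_comm]
          exact h2
        have hp2 : p.2 = 0 := hδ.injective (by rw [hδ0, map_zero])
        refine Prod.ext ?_ ?_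
        · rw [hp1, hp2, map_zero, map_zero]; rfl
        · rw [hp2]; rfl
      · intro z
        obtain ⟨y, hy⟩ := hδ.surjective (z.2 + f21 (β z.1))
        refine ⟨(β (z.1 + f12 y), y), ?_⟩
        rw [hF']
        refine Prod.ext ?_ ?_
        · show β (z.1 + f12 y) - (f11 (β (z.1 + f12 y)) + f12 y) = z.1
          rw [sub_add_eq_sub_sub, hβ2]
          abel
        · show y - (f21 (β (z.1 + f12 y)) + f22 y) = z.2
          have hx : f21 (β (z.1 + f12 y)) = f21 (β z.1) + f21 (β (f12 y)) := by
            rw [map_add, map_add]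
          have hkey : y - (f22 y + f21 (β (f12 y))) = z.2 + f21 (β z.1) := by
            rw [← hδeq]; exact hy
          calc y - (f21 (β (z.1 + f12 y)) + f22 y)
              = (y - (f22 y + f21 (β (f12 y)))) - f21 (β z.1) := by rw [hx]; abel
            _ = (z.2 + f21 (β z.1)) - f21 (β z.1) := by rw [hkey]
            _ = z.2 := add_sub_cancel_right _ _
    have hconj : ∀ x, ((LinearMap.id : (Fin (t+1) → V) →ₗ[A] (Fin (t+1) → V)) - h ∘ₗ g) x
        = E.symm (F' (E x)) := by
      intro x
      simp only [hF'def, LinearMap.sub_apply, LinearMap.id_apply, LinearMap.comp_apply,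
        map_sub, hg', hh', LinearMap.coe_comp, Function.comp_apply,
        LinearEquiv.coe_coe, LinearEquiv.symm_apply_apply]
    rw [show ⇑((LinearMap.id : (Fin (t+1) → V) →ₗ[A] (Fin (t+1) → V)) - h ∘ₗ g)
        = ⇑E.symm ∘ ⇑F' ∘ ⇑E from funext hconj]
    exact E.symm.bijective.comp (hbij'.comp E.bijective)
end L

section crux
variable {A : Type} [Ring A] {U V : Type}
  [AddCommGroup U] [Module A U] [AddCommGroup V] [Module A V]

lemma aux_crux (k : Type) [Field k] [Algebra k A] [Module k U] [Module k V]
    [IsScalarTower k A U] [IsScalarTower k A V] [FiniteDimensional k U] [FiniteDimensional k V]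
    (hV : Nontrivial V)
    (hindU : ∀ N₁ N₂ : Submodule A U, IsCompl N₁ N₂ → N₁ = ⊥ ∨ N₂ = ⊥)
    (hindV : ∀ N₁ N₂ : Submodule A V, IsCompl N₁ N₂ → N₁ = ⊥ ∨ N₂ = ⊥)
    (hnoniso : IsEmpty (U ≃ₗ[A] V)) (s t : ℕ)
    (B C : Submodule A ((Fin s → U) × (Fin t → V))) (hc : IsCompl B C)
    (e : B ≃ₗ[A] (Fin t → V)) (qC : C ≃ₗ[A] (Fin s → U)) :
    Function.Bijective ((LinearMap.snd A (Fin s → U) (Fin t → V)) ∘ₗ B.subtype) := by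
  set M := Fin s → U
  set N := Fin t → V
  have hP : ∀ (a : V →ₗ[A] M) (b : M →ₗ[A] V), ¬ IsUnit (b ∘ₗ a : Module.End A V) :=
    fun a b => aux_pgood k hV hindU hindV hnoniso s a b
  set pB := Submodule.linearProjOfIsCompl B C hc with hpBdef
  set pC := Submodule.linearProjOfIsCompl C B hc.symm with hpCdef
  set c : B →ₗ[A] N := (LinearMap.snd A M N) ∘ₗ B.subtype with hcdef
  set γ : N →ₗ[A] B := pB ∘ₗ LinearMap.inr A M N with hγdef
  -- injectivity
  set g1 : N →ₗ[A] M := (LinearMap.fst A M N) ∘ₗ B.subtype ∘ₗ e.symm.toLinearMap with hg1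
  set h1 : M →ₗ[A] N := e.toLinearMap ∘ₗ pB ∘ₗ LinearMap.inl A M N with hh1
  have hbij1 := aux_L k hindV t M hP g1 h1
  have hγc : ∀ b : B, γ (c b) = e.symm (((LinearMap.id : N →ₗ[A] N) - h1 ∘ₗ g1) (e b)) := by
    intro b
    have hb : LinearMap.inl A M N ((b : M × N).1) + LinearMap.inr A M N ((b : M × N).2)
        = (b : M × N) := by
      refine Prod.ext (by simp) (by simp)
    have hsplit : pB (LinearMap.inl A M N ((b : M × N).1))
        + pB (LinearMap.inr A M N ((b : M × N).2)) = b := by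
      rw [← map_add, hb]
      exact Submodule.linearProjOfIsCompl_apply_left hc b
    have hlhs : γ (c b) = b - pB (LinearMap.inl A M N ((b : M × N).1)) := by
      rw [hγdef, hcdef]
      simp only [LinearMap.comp_apply, LinearMap.snd_apply, Submodule.coe_subtype]
      rw [eq_sub_iff_add_eq, add_comm]
      exact hsplit
    rw [hlhs]
    simp only [LinearMap.sub_apply, LinearMap.id_apply, LinearMap.comp_apply, map_sub,
      LinearEquiv.symm_apply_apply, hh1, hg1, LinearMap.comp_apply]
    simp [LinearEquiv.coe_coe, LinearEquiv.symm_apply_apply]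
  have hinj : Function.Injective c := by
    have hcomp : Function.Injective (⇑γ ∘ ⇑c) := by
      rw [show ⇑γ ∘ ⇑c
          = ⇑e.symm ∘ ⇑((LinearMap.id : N →ₗ[A] N) - h1 ∘ₗ g1) ∘ ⇑e from funext hγc]
      exact e.symm.injective.comp (hbij1.injective.comp e.injective)
    exact Function.Injective.of_comp hcomp
  -- surjectivity
  set g3 : N →ₗ[A] M := qC.toLinearMap ∘ₗ pC ∘ₗ LinearMap.inr A M N with hg3
  set h3 : M →ₗ[A] N := (LinearMap.snd A M N) ∘ₗ C.subtype ∘ₗ qC.symm.toLinearMap with hh3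
  have hbij3 := aux_L k hindV t M hP g3 h3
  have hcγ : ∀ n : N, c (γ n) = ((LinearMap.id : N →ₗ[A] N) - h3 ∘ₗ g3) n := by
    intro n
    have hdec := Submodule.projection_add_projection_eq_self hc (LinearMap.inr A M N n)
    have hsnd := congrArg Prod.snd hdec
    simp only [Prod.snd_add, LinearMap.inr_apply] at hsnd
    -- hsnd : (↑(pB (inr n))).2 + (↑(pC (inr n))).2 = n
    simp only [LinearMap.sub_apply, LinearMap.id_apply, LinearMap.comp_apply,
      hcdef, hγdef, hh3, hg3, LinearMap.comp_apply, LinearMap.snd_apply,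
      Submodule.coe_subtype, LinearEquiv.coe_coe, LinearEquiv.symm_apply_apply]
    rw [eq_sub_iff_add_eq]
    exact hsnd
  have hsurj : Function.Surjective c := by
    have hcomp : Function.Surjective (⇑c ∘ ⇑γ) := by
      rw [show ⇑c ∘ ⇑γ = ⇑((LinearMap.id : N →ₗ[A] N) - h3 ∘ₗ g3) from funext hcγ]
      exact hbij3.surjective
    exact Function.Surjective.of_comp hcomp
  exact ⟨hinj, hsurj⟩
end crux

/-- Let `k` be a finite field with `q` elements, `A` a finite-dimensional
`k`-algebra and `U, V` non-isomorphic indecomposable finite-dimensional `A`-modules. Let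
`s, t > 0`, `M = U^{⊕s}`, `N = V^{⊕t}`, and assume every short exact sequence
`0 → N → E → M → 0` splits. Then the number of `A`-submodules `B` of `M ⊕ N` with `B ≅ N`
and `(M ⊕ N)/B ≅ M` equals `|Hom_A(N, M)| = q^(s·t·dim_k Hom_A(V, U))`. -/
theorem stmt7 (k : Type) [Field k] [Fintype k] (q : ℕ) (hq : Fintype.card k = q)
    (A : Type) [Ring A] [Algebra k A] [FiniteDimensional k A]
    (U V : Type)
    [AddCommGroup U] [Module k U] [Module A U] [IsScalarTower k A U] [SMulCommClass k A U]
    [FiniteDimensional k U]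
    [AddCommGroup V] [Module k V] [Module A V] [IsScalarTower k A V] [SMulCommClass k A V]
    [FiniteDimensional k V]
    (hU : Nontrivial U) (hV : Nontrivial V)
    (hindU : ∀ N₁ N₂ : Submodule A U, IsCompl N₁ N₂ → N₁ = ⊥ ∨ N₂ = ⊥)
    (hindV : ∀ N₁ N₂ : Submodule A V, IsCompl N₁ N₂ → N₁ = ⊥ ∨ N₂ = ⊥)
    (hnoniso : IsEmpty (U ≃ₗ[A] V))
    (s t : ℕ) (hs : 0 < s) (ht : 0 < t)
    (hsplit : ∀ (E : Type) [AddCommGroup E] [Module k E] [Module A E]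
      [IsScalarTower k A E] [FiniteDimensional k E] (f : (Fin t → V) →ₗ[A] E),
      Function.Injective f →
        Nonempty ((E ⧸ LinearMap.range f) ≃ₗ[A] (Fin s → U)) →
          ∃ C : Submodule A E, IsCompl (LinearMap.range f) C) :
    Nat.card {B : Submodule A ((Fin s → U) × (Fin t → V)) //
        Nonempty (B ≃ₗ[A] (Fin t → V)) ∧
          Nonempty ((((Fin s → U) × (Fin t → V)) ⧸ B) ≃ₗ[A] (Fin s → U))} =
      Nat.card ((Fin t → V) →ₗ[A] (Fin s → U)) ∧
    Nat.card ((Fin t → V) →ₗ[A] (Fin s → U)) =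
      q ^ (s * t * Module.finrank k (V →ₗ[A] U)) := by
  constructor
  · -- the submodule count
    set M := Fin s → U with hM
    set N := Fin t → V with hN
    set Gr : (N →ₗ[A] M) → Submodule A (M × N) :=
      fun φ => LinearMap.range (φ.prod LinearMap.id) with hGr
    have hGrmem : ∀ (φ : N →ₗ[A] M) (x : M × N), x ∈ Gr φ ↔ x.1 = φ x.2 := by
      intro φ x
      constructor
      · rintro ⟨n, rfl⟩
        simp [LinearMap.prod_apply]
      · intro hx
        exact ⟨x.2, Prod.ext (by simp [hx]) (by simp)⟩
    have hprop : ∀ φ : N →ₗ[A] M, Nonempty (Gr φ ≃ₗ[A] N) ∧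
        Nonempty (((M × N) ⧸ Gr φ) ≃ₗ[A] M) := by
      intro φ
      have hinj : Function.Injective (φ.prod LinearMap.id) := by
        intro n m h
        simpa using congrArg Prod.snd h
      constructor
      · exact ⟨(LinearEquiv.ofInjective _ hinj).symm⟩
      · set π : (M × N) →ₗ[A] M := (LinearMap.fst A M N) - φ ∘ₗ (LinearMap.snd A M N) with hπ
        have hπapp : ∀ x : M × N, π x = x.1 - φ x.2 := fun x => rfl
        have hker : LinearMap.ker π = Gr φ := by
          ext x
          rw [LinearMap.mem_ker, hπapp, sub_eq_zero, hGrmem]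
        have hsurj : Function.Surjective π := by
          intro m
          exact ⟨(m, 0), by rw [hπapp]; simp⟩
        exact ⟨(Submodule.quotEquivOfEq _ _ hker.symm).trans
          (π.quotKerEquivOfSurjective hsurj)⟩
    have hGinj : Function.Injective Gr := by
      intro φ ψ h
      apply LinearMap.ext
      intro n
      have : ((φ n, n) : M × N) ∈ Gr ψ := by
        rw [← h]
        exact (hGrmem φ (φ n, n)).mpr rfl
      simpa using (hGrmem ψ (φ n, n)).mp this
    have hGsurj : ∀ B : Submodule A (M × N),
        (Nonempty (B ≃ₗ[A] N) ∧ Nonempty (((M × N) ⧸ B) ≃ₗ[A] M)) → ∃ φ, Gr φ = B := by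
      rintro B ⟨⟨e⟩, ⟨qiso⟩⟩
      set f : N →ₗ[A] M × N := B.subtype ∘ₗ e.symm.toLinearMap with hf
      have hfinj : Function.Injective f := B.injective_subtype.comp e.symm.injective
      have hrange : LinearMap.range f = B := by
        rw [hf, LinearMap.range_comp, LinearEquiv.range, Submodule.map_top,
          Submodule.range_subtype]
      obtain ⟨C, hC⟩ := hsplit (M × N) f hfinj
        ⟨(Submodule.quotEquivOfEq _ _ (by rw [hrange])).trans qiso⟩
      rw [hrange] at hC
      have hbij := aux_crux k hV hindU hindV hnoniso s t B C hC e
        ((Submodule.quotientEquivOfIsCompl B C hC).symm.trans qiso)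
      set cE : B ≃ₗ[A] N :=
        LinearEquiv.ofBijective ((LinearMap.snd A M N) ∘ₗ B.subtype) hbij with hcE
      have hcEapp : ∀ b : B, cE b = (b : M × N).2 := fun b => rfl
      refine ⟨(LinearMap.fst A M N) ∘ₗ B.subtype ∘ₗ cE.symm.toLinearMap, ?_⟩
      ext x
      rw [hGrmem]
      constructor
      · intro hx
        have h2 : ((cE.symm x.2 : B) : M × N).2 = x.2 := by
          rw [← hcEapp (cE.symm x.2), LinearEquiv.apply_symm_apply]
        have h1 : ((cE.symm x.2 : B) : M × N).1 = x.1 := by rw [hx]; rfl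
        have hxeq : x = ((cE.symm x.2 : B) : M × N) := Prod.ext h1.symm h2.symm
        rw [hxeq]
        exact Submodule.coe_mem _
      · intro hx
        have hb : cE.symm x.2 = (⟨x, hx⟩ : B) := by
          apply cE.injective
          rw [LinearEquiv.apply_symm_apply, hcEapp]
        simp only [LinearMap.comp_apply, LinearEquiv.coe_coe, hb,
          Submodule.coe_subtype, LinearMap.fst_apply]
    have hbijPhi : Function.Bijective (fun φ : N →ₗ[A] M => (⟨Gr φ, hprop φ⟩ :
        {B : Submodule A (M × N) // Nonempty (B ≃ₗ[A] N) ∧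
          Nonempty (((M × N) ⧸ B) ≃ₗ[A] M)})) := by
      constructor
      · intro φ ψ h
        exact hGinj (congrArg Subtype.val h)
      · rintro ⟨B, hB⟩
        obtain ⟨φ, hφ⟩ := hGsurj B hB
        exact ⟨φ, Subtype.ext hφ⟩
    exact (Nat.card_congr (Equiv.ofBijective _ hbijPhi)).symm
  · -- the cardinality of the Hom space
    set H := V →ₗ[A] U with hH
    haveI : FiniteDimensional k (V →ₗ[k] U) := inferInstance
    haveI hfdH : FiniteDimensional k H := by
      apply FiniteDimensional.of_injective
        (LinearMap.restrictScalarsₗ k A V U k)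
      exact LinearMap.restrictScalars_injective k
    haveI : Finite H := Module.finite_of_finite k
    haveI : Fintype H := Fintype.ofFinite H
    have hcardH : Nat.card H = q ^ Module.finrank k H := by
      rw [Nat.card_eq_fintype_card, ← hq]
      exact Module.card_eq_pow_finrank
    -- an equivalence Hom(V^t, U^s) ≃ matrices of Hom(V,U)
    classical
    set EH : ((Fin t → V) →ₗ[A] (Fin s → U)) ≃ (Fin s → Fin t → H) :=
      { toFun := fun f i j => (LinearMap.proj i) ∘ₗ f ∘ₗ (LinearMap.single A (fun _ => V) j)
        invFun := fun g => LinearMap.pi (fun i => ∑ j, (g i j) ∘ₗ (LinearMap.proj j))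
        left_inv := by
          intro f
          apply LinearMap.ext
          intro x
          funext i
          rw [LinearMap.pi_apply, LinearMap.sum_apply]
          simp only [LinearMap.comp_apply, LinearMap.proj_apply, LinearMap.single_apply]
          rw [← Finset.sum_apply, ← map_sum, Finset.univ_sum_single]
        right_inv := by
          intro g
          funext i j
          apply LinearMap.ext
          intro v
          simp only [LinearMap.comp_apply, LinearMap.single_apply, LinearMap.pi_apply,
            LinearMap.sum_apply, LinearMap.proj_apply]
          rw [Finset.sum_eq_single j]
          · rw [Pi.single_eq_same]
          · intro b _ hb
            rw [Pi.single_eq_of_ne hb, map_zero]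
          · intro hj
            exact absurd (Finset.mem_univ j) hj } with hEH
    rw [Nat.card_congr EH, Nat.card_fun, Nat.card_fun, hcardH,
      Nat.card_eq_fintype_card, Fintype.card_fin, Nat.card_eq_fintype_card, Fintype.card_fin,
      ← pow_mul, ← pow_mul]
    congr 1
    ring
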